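/- Let F be the family of all subsets of [3] of size at most 2 and let A, B be i.i.d. uniform random sets from F. Then H(A ∪ B) < H(A) = log₂ 7. -/
import Mathlib


open Finset

/-- Base-2 Shannon entropy of a probability distribution `p` supported on `s`. -/
noncomputable def entropy {α : Type*} (s : Finset α) (p : α → ℝ) : ℝ :=
  ∑ x ∈ s, -(p x * Real.logb 2 (p x))

/-- The family of all subsets of `[3]` of size at most 2. -/
def F8 : Finset (Finset (Fin 3)) := Finset.univ.filter (fun S => S.card ≤ 2)

/-- Distribution of `A ∪ B` where `A, B` are i.i.d. uniform on `F8`. -/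
noncomputable def unionDist8 (S : Finset (Fin 3)) : ℝ :=
  (((F8 ×ˢ F8).filter (fun q => q.1 ∪ q.2 = S)).card : ℝ) / ((F8 ×ˢ F8).card : ℝ)

lemma uD (S : Finset (Fin 3)) (n : ℕ)
    (h : ((F8 ×ˢ F8).filter (fun q => q.1 ∪ q.2 = S)).card = n) :
    unionDist8 S = (n : ℝ) / 49 := by
  rw [unionDist8, h, show (F8 ×ˢ F8).card = 49 from by decide]
  norm_num

lemma combine (a b c : ℝ) (ha : 0 < a) (key : 49*c < 75*b + 24*a) :
    -(1/49 * (-(2*c)/a)) + (-(3/49 * ((b - 2*c)/a)) + (-(3/49 * ((b - 2*c)/a)) +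
      (-(3/49 * ((b - 2*c)/a)) + (-(9/49 * ((2*b - 2*c)/a)) + (-(9/49 * ((2*b - 2*c)/a)) +
      (-(9/49 * ((2*b - 2*c)/a)) + -(12/49 * ((2*a + b - 2*c)/a)))))))) < c / a := by
  have hane : a ≠ 0 := ha.ne'
  have heq : -(1/49 * (-(2*c)/a)) + (-(3/49 * ((b - 2*c)/a)) + (-(3/49 * ((b - 2*c)/a)) +
      (-(3/49 * ((b - 2*c)/a)) + (-(9/49 * ((2*b - 2*c)/a)) + (-(9/49 * ((2*b - 2*c)/a)) +
      (-(9/49 * ((2*b - 2*c)/a)) + -(12/49 * ((2*a + b - 2*c)/a))))))))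
      = (98*c - 75*b - 24*a) / (49*a) := by
    field_simp
    ring
  rw [heq, div_lt_div_iff₀ (by positivity) ha]
  nlinarith [mul_lt_mul_of_pos_right key ha]

/-- For `F = {S ⊆ [3] : |S| ≤ 2}` and `A, B` i.i.d. uniform on `F`:
`H(A ∪ B) < H(A) = log₂ 7`. -/
theorem stmt8 :
    entropy (Finset.image₂ (· ∪ ·) F8 F8) unionDist8
      < entropy F8 (fun _ => (F8.card : ℝ)⁻¹) ∧
    entropy F8 (fun _ => (F8.card : ℝ)⁻¹) = Real.logb 2 7 := by
  have hcard : F8.card = 7 := by decide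
  have hright : entropy F8 (fun _ => (F8.card : ℝ)⁻¹) = Real.logb 2 7 := by
    rw [entropy, Finset.sum_const, hcard]
    rw [show ((7:ℕ) : ℝ)⁻¹ = (7:ℝ)⁻¹ by norm_num, Real.logb_inv]
    push_cast
    ring
  refine ⟨?_, hright⟩
  rw [hright]
  have himg : Finset.image₂ (· ∪ ·) F8 F8 =
      ({∅, {0}, {1}, {2}, {0,1}, {0,2}, {1,2}, {0,1,2}} : Finset (Finset (Fin 3))) := by
    decide
  have h0 : unionDist8 ∅ = 1 / 49 := by rw [uD _ 1 (by decide)]; norm_num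
  have h1 : unionDist8 {0} = 3 / 49 := by rw [uD _ 3 (by decide)]; norm_num
  have h2 : unionDist8 {1} = 3 / 49 := by rw [uD _ 3 (by decide)]; norm_num
  have h3 : unionDist8 {2} = 3 / 49 := by rw [uD _ 3 (by decide)]; norm_num
  have h4 : unionDist8 {0,1} = 9 / 49 := by rw [uD _ 9 (by decide)]; norm_num
  have h5 : unionDist8 {0,2} = 9 / 49 := by rw [uD _ 9 (by decide)]; norm_num
  have h6 : unionDist8 {1,2} = 9 / 49 := by rw [uD _ 9 (by decide)]; norm_num
  have h7 : unionDist8 {0,1,2} = 12 / 49 := by rw [uD _ 12 (by decide)]; norm_num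
  rw [entropy, himg]
  rw [Finset.sum_insert (by decide), Finset.sum_insert (by decide),
      Finset.sum_insert (by decide), Finset.sum_insert (by decide),
      Finset.sum_insert (by decide), Finset.sum_insert (by decide),
      Finset.sum_insert (by decide), Finset.sum_singleton]
  rw [h0, h1, h2, h3, h4, h5, h6, h7]
  have ha : (0:ℝ) < Real.log 2 := Real.log_pos (by norm_num)
  have key : 49 * Real.log 7 < 75 * Real.log 3 + 24 * Real.log 2 := by
    have h : Real.log ((7:ℝ)^49) < Real.log ((3:ℝ)^75 * (2:ℝ)^24) := by
      apply Real.log_lt_log (by positivity)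
      norm_num
    rw [Real.log_pow, Real.log_mul (by positivity) (by positivity),
        Real.log_pow, Real.log_pow] at h
    push_cast at h
    linarith
  have e1 : Real.logb 2 (1/49 : ℝ) = (-(2 * Real.log 7)) / Real.log 2 := by
    rw [Real.logb, show (1/49:ℝ) = (7^2)⁻¹ by norm_num, Real.log_inv, Real.log_pow]
    push_cast; ring
  have e2 : Real.logb 2 (3/49 : ℝ) = (Real.log 3 - 2 * Real.log 7) / Real.log 2 := by
    rw [Real.logb, Real.log_div (by norm_num) (by norm_num),
        show (49:ℝ) = 7^2 by norm_num, Real.log_pow]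
    push_cast; ring
  have e3 : Real.logb 2 (9/49 : ℝ) = (2 * Real.log 3 - 2 * Real.log 7) / Real.log 2 := by
    rw [Real.logb, Real.log_div (by norm_num) (by norm_num),
        show (49:ℝ) = 7^2 by norm_num, show (9:ℝ) = 3^2 by norm_num,
        Real.log_pow, Real.log_pow]
    push_cast; ring
  have e4 : Real.logb 2 (12/49 : ℝ) =
      (2 * Real.log 2 + Real.log 3 - 2 * Real.log 7) / Real.log 2 := by
    rw [Real.logb, Real.log_div (by norm_num) (by norm_num),
        show (49:ℝ) = 7^2 by norm_num, show (12:ℝ) = 2^2 * 3 by norm_num,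
        Real.log_mul (by norm_num) (by norm_num), Real.log_pow, Real.log_pow]
    push_cast; ring
  rw [e1, e2, e3, e4, Real.logb]
  linarith [combine (Real.log 2) (Real.log 3) (Real.log 7) ha key]
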